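/- Let x₁, …, x_n ∈ ℝ^d, M ⊆ {1,…,n} nonempty, and suppose x' = Σ_j w_j x_j and y' = Σ_j v_j x_j are two weighted averages with nonnegative weights summing to 1, each placing total weight at least α ∈ (0,1] on M. Then there exist u_∥ in the direction space span{x_i − x_j : i, j ∈ M} and u_res ∈ {x − y : x, y ∈ conv{x₁,…,x_n}} with x' − y' = α·u_∥ + (1−α)·u_res. -/
import Mathlib

lemma aux_span_mem {d n : ℕ} (x : Fin n → EuclideanSpace ℝ (Fin d))
    (M : Finset (Fin n)) (i₀ : Fin n) (hi₀ : i₀ ∈ M) (c : Fin n → ℝ)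
    (hc0 : ∀ j ∉ M, c j = 0) (hcs : ∑ j, c j = 0) :
    ∑ j, c j • x j ∈
      Submodule.span ℝ {u : EuclideanSpace ℝ (Fin d) | ∃ i ∈ M, ∃ j ∈ M, u = x i - x j} := by
  have h : ∑ j, c j • x j = ∑ j, c j • (x j - x i₀) := by
    simp [smul_sub, Finset.sum_sub_distrib, ← Finset.sum_smul, hcs]
  rw [h]
  apply Submodule.sum_mem
  intro j _
  by_cases hj : j ∈ M
  · exact Submodule.smul_mem _ _ (Submodule.subset_span ⟨j, hj, i₀, hi₀, rfl⟩)
  · simp [hc0 j hj]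

lemma aux_hull_mem {d n : ℕ} (x : Fin n → EuclideanSpace ℝ (Fin d))
    (c : Fin n → ℝ) (hc : ∀ j, 0 ≤ c j) (hcs : ∑ j, c j = 1) :
    ∑ j, c j • x j ∈ convexHull ℝ (Set.range x) := by
  have := Finset.centerMass_mem_convexHull Finset.univ (fun i _ => hc i)
    (by rw [hcs]; norm_num) (fun i _ => Set.mem_range_self (f := x) i)
  rwa [Finset.centerMass_eq_of_sum_1 _ _ hcs] at this

theorem differences_decomposition {d n : ℕ}
    (x : Fin n → EuclideanSpace ℝ (Fin d))
    (M : Finset (Fin n)) (hM : M.Nonempty)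
    (w v : Fin n → ℝ)
    (hw : ∀ j, 0 ≤ w j) (hw1 : ∑ j, w j = 1)
    (hv : ∀ j, 0 ≤ v j) (hv1 : ∑ j, v j = 1)
    (α : ℝ) (hα : α ∈ Set.Ioc (0:ℝ) 1)
    (hαw : α ≤ ∑ j ∈ M, w j) (hαv : α ≤ ∑ j ∈ M, v j)
    (x' y' : EuclideanSpace ℝ (Fin d))
    (hx' : x' = ∑ j, w j • x j) (hy' : y' = ∑ j, v j • x j) :
    ∃ upar ∈ Submodule.span ℝ {u : EuclideanSpace ℝ (Fin d) | ∃ i ∈ M, ∃ j ∈ M, u = x i - x j},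
      ∃ ures ∈ {u : EuclideanSpace ℝ (Fin d) |
          ∃ p ∈ convexHull ℝ (Set.range x), ∃ q ∈ convexHull ℝ (Set.range x), u = p - q},
        x' - y' = α • upar + (1 - α) • ures := by
  obtain ⟨i₀, hi₀⟩ := hM
  have hα0 : 0 < α := hα.1
  have hdiff : x' - y' = ∑ j, (w j - v j) • x j := by
    rw [hx', hy', ← Finset.sum_sub_distrib]
    simp [sub_smul]
  rcases eq_or_lt_of_le hα.2 with h1 | h1
  · -- α = 1
    have hle : ∑ j ∈ M, w j ≤ 1 := by
      rw [← hw1]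
      exact Finset.sum_le_sum_of_subset_of_nonneg (Finset.subset_univ M)
        (fun i _ _ => hw i)
    have hle' : ∑ j ∈ M, v j ≤ 1 := by
      rw [← hv1]
      exact Finset.sum_le_sum_of_subset_of_nonneg (Finset.subset_univ M)
        (fun i _ _ => hv i)
    have hwM : ∑ j ∈ M, w j = 1 := le_antisymm hle (by linarith)
    have hvM : ∑ j ∈ M, v j = 1 := le_antisymm hle' (by linarith)
    have hwc : ∑ j ∈ Mᶜ, w j = 0 := by
      have := Finset.sum_add_sum_compl M w
      rw [hwM, hw1] at this; linarith
    have hvc : ∑ j ∈ Mᶜ, v j = 0 := by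
      have := Finset.sum_add_sum_compl M v
      rw [hvM, hv1] at this; linarith
    have hw0 : ∀ j ∉ M, w j = 0 := by
      intro j hj
      have := (Finset.sum_eq_zero_iff_of_nonneg (fun i _ => hw i)).mp hwc
      exact this j (Finset.mem_compl.mpr hj)
    have hv0 : ∀ j ∉ M, v j = 0 := by
      intro j hj
      have := (Finset.sum_eq_zero_iff_of_nonneg (fun i _ => hv i)).mp hvc
      exact this j (Finset.mem_compl.mpr hj)
    refine ⟨x' - y', ?_, 0,
      ⟨x i₀, subset_convexHull ℝ _ (Set.mem_range_self i₀),
       x i₀, subset_convexHull ℝ _ (Set.mem_range_self i₀), (sub_self _).symm⟩, ?_⟩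
    · rw [hdiff]
      exact aux_span_mem x M i₀ hi₀ _
        (fun j hj => by rw [hw0 j hj, hv0 j hj, sub_self])
        (by rw [Finset.sum_sub_distrib, hw1, hv1, sub_self])
    · rw [h1]; simp
  · -- α < 1
    have hβ : (0:ℝ) < 1 - α := by linarith
    have hβ' : (1:ℝ) - α ≠ 0 := ne_of_gt hβ
    have haw : (0:ℝ) < ∑ j ∈ M, w j := lt_of_lt_of_le hα0 hαw
    have hav : (0:ℝ) < ∑ j ∈ M, v j := lt_of_lt_of_le hα0 hαv
    set aw := ∑ j ∈ M, w j with haw_def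
    set av := ∑ j ∈ M, v j with hav_def
    set wpar : Fin n → ℝ := fun j => if j ∈ M then w j / aw else 0 with hwpar
    set vpar : Fin n → ℝ := fun j => if j ∈ M then v j / av else 0 with hvpar
    set wres : Fin n → ℝ := fun j => (w j - α * wpar j) / (1 - α) with hwres
    set vres : Fin n → ℝ := fun j => (v j - α * vpar j) / (1 - α) with hvres
    have hwpar0 : ∀ j ∉ M, wpar j = 0 := fun j hj => by simp [hwpar, hj]
    have hvpar0 : ∀ j ∉ M, vpar j = 0 := fun j hj => by simp [hvpar, hj]
    have hwpars : ∑ j, wpar j = 1 := by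
      rw [hwpar]
      rw [Finset.sum_ite_mem, Finset.univ_inter, ← Finset.sum_div, ← haw_def,
        div_self (ne_of_gt haw)]
    have hvpars : ∑ j, vpar j = 1 := by
      rw [hvpar]
      rw [Finset.sum_ite_mem, Finset.univ_inter, ← Finset.sum_div, ← hav_def,
        div_self (ne_of_gt hav)]
    have hwresnn : ∀ j, 0 ≤ wres j := by
      intro j
      apply div_nonneg _ (le_of_lt hβ)
      by_cases hj : j ∈ M
      · simp only [hwpar, hj, if_true]
        rw [sub_nonneg, ← mul_div_assoc, div_le_iff₀ haw]
        nlinarith [hw j]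
      · simp [hwpar, hj, hw j]
    have hvresnn : ∀ j, 0 ≤ vres j := by
      intro j
      apply div_nonneg _ (le_of_lt hβ)
      by_cases hj : j ∈ M
      · simp only [hvpar, hj, if_true]
        rw [sub_nonneg, ← mul_div_assoc, div_le_iff₀ hav]
        nlinarith [hv j]
      · simp [hvpar, hj, hv j]
    have hwress : ∑ j, wres j = 1 := by
      simp only [hwres]
      rw [← Finset.sum_div, Finset.sum_sub_distrib, hw1, ← Finset.mul_sum, hwpars,
        mul_one, div_self hβ']
    have hvress : ∑ j, vres j = 1 := by
      simp only [hvres]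
      rw [← Finset.sum_div, Finset.sum_sub_distrib, hv1, ← Finset.mul_sum, hvpars,
        mul_one, div_self hβ']
    have key : ∀ j, w j - v j
        = α * (wpar j - vpar j) + (1 - α) * (wres j - vres j) := by
      intro j
      simp only [hwres, hvres]
      field_simp
      ring
    refine ⟨∑ j, (wpar j - vpar j) • x j, ?_,
      (∑ j, wres j • x j) - (∑ j, vres j • x j),
      ⟨∑ j, wres j • x j, aux_hull_mem x wres hwresnn hwress,
       ∑ j, vres j • x j, aux_hull_mem x vres hvresnn hvress, rfl⟩, ?_⟩
    · exact aux_span_mem x M i₀ hi₀ _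
        (fun j hj => by rw [hwpar0 j hj, hvpar0 j hj, sub_self])
        (by rw [Finset.sum_sub_distrib, hwpars, hvpars, sub_self])
    · rw [hdiff, Finset.smul_sum, ← Finset.sum_sub_distrib, Finset.smul_sum,
        ← Finset.sum_add_distrib]
      refine Finset.sum_congr rfl fun j _ => ?_
      rw [key j, add_smul, smul_smul, ← sub_smul, smul_smul]
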